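/- (CS structure of recursive PD) Suppose a polyadic decomposition of T_{nnn} of length r = s + 3t is cyclic symmetric with factor matrices U = [A B C D], V = [A D B C], W = [A C D B], where A has s columns and B, C, D each have t columns. Then the recursive polyadic decomposition of T_{n²n²n²} of length r² obtained by Kronecker products is also cyclic symmetric, with parameters s' = s² and t' = t(s + r). -/

import Mathlib

/-- The matrix multiplication tensor for square matrix multiplication, in entry form,
over an arbitrary index type `α` (so `α = Fin n` gives `T_{nnn}` and
`α = Fin n × Fin n` gives `T_{n²n²n²}`). -/
def Tsq {α : Type*} [DecidableEq α] (x y z : α × α) : ℝ :=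
  if x.1 = z.2 ∧ x.2 = y.1 ∧ y.2 = z.1 then 1 else 0

namespace CSRec

variable {n s t : ℕ}

def s1 (x : (Fin n × Fin n) × (Fin n × Fin n)) : Fin n × Fin n := (x.1.1, x.2.1)
def s2 (x : (Fin n × Fin n) × (Fin n × Fin n)) : Fin n × Fin n := (x.1.2, x.2.2)

lemma Tsq_split (x y z : (Fin n × Fin n) × (Fin n × Fin n)) :
    Tsq x y z = Tsq (s1 x) (s1 y) (s1 z) * Tsq (s2 x) (s2 y) (s2 z) := by
  simp only [Tsq, s1, s2, ite_zero_mul_ite_zero, one_mul]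
  split_ifs <;> grind [Prod.ext_iff]

/-- Index type for the new cyclic families. -/
abbrev J (s t : ℕ) :=
  (Fin s × Fin t) ⊕ (Fin t × Fin s) ⊕ (Fin t × Fin t) ⊕ (Fin t × Fin t) ⊕ (Fin t × Fin t)

def B' (a : Fin s → (Fin n × Fin n) → ℝ) (b c d : Fin t → (Fin n × Fin n) → ℝ) :
    J s t → ((Fin n × Fin n) × (Fin n × Fin n)) → ℝ
  | .inl (i, j), x => a i (s1 x) * b j (s2 x)
  | .inr (.inl (j, k)), x => b j (s1 x) * a k (s2 x)
  | .inr (.inr (.inl (j, l))), x => b j (s1 x) * b l (s2 x)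
  | .inr (.inr (.inr (.inl (j, l)))), x => b j (s1 x) * c l (s2 x)
  | .inr (.inr (.inr (.inr (j, l)))), x => b j (s1 x) * d l (s2 x)

def D' (a : Fin s → (Fin n × Fin n) → ℝ) (b c d : Fin t → (Fin n × Fin n) → ℝ) :
    J s t → ((Fin n × Fin n) × (Fin n × Fin n)) → ℝ
  | .inl (i, j), x => a i (s1 x) * d j (s2 x)
  | .inr (.inl (j, k)), x => d j (s1 x) * a k (s2 x)
  | .inr (.inr (.inl (j, l))), x => d j (s1 x) * d l (s2 x)
  | .inr (.inr (.inr (.inl (j, l)))), x => d j (s1 x) * b l (s2 x)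
  | .inr (.inr (.inr (.inr (j, l)))), x => d j (s1 x) * c l (s2 x)

def C' (a : Fin s → (Fin n × Fin n) → ℝ) (b c d : Fin t → (Fin n × Fin n) → ℝ) :
    J s t → ((Fin n × Fin n) × (Fin n × Fin n)) → ℝ
  | .inl (i, j), x => a i (s1 x) * c j (s2 x)
  | .inr (.inl (j, k)), x => c j (s1 x) * a k (s2 x)
  | .inr (.inr (.inl (j, l))), x => c j (s1 x) * c l (s2 x)
  | .inr (.inr (.inr (.inl (j, l)))), x => c j (s1 x) * d l (s2 x)
  | .inr (.inr (.inr (.inr (j, l)))), x => c j (s1 x) * b l (s2 x)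

lemma sum_three {ι κ : Type*} [Fintype ι] [Fintype κ] (f g h : ι → κ → ℝ) :
    (∑ i, ∑ j, f i j) + ((∑ i, ∑ j, g i j) + (∑ i, ∑ j, h i j)) =
      ∑ i, ∑ j, (f i j + g i j + h i j) := by
  simp [Finset.sum_add_distrib, add_assoc]

end CSRec

open CSRec in
/-- CS structure of the recursive PD: if `T_{nnn}` has a cyclic symmetric
polyadic decomposition of length `r = s + 3t` with parameters `(s, t)`, then
`T_{n²n²n²}` has a cyclic symmetric polyadic decomposition of length `r²` with
parameters `s' = s²` and `t' = t(s + r)`. -/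
theorem cs_recursive_pd (n s t r : ℕ) (hr : r = s + 3 * t)
    (a : Fin s → (Fin n × Fin n) → ℝ) (b c d : Fin t → (Fin n × Fin n) → ℝ)
    (h : ∀ x y z : Fin n × Fin n,
      Tsq x y z = ∑ i : Fin s, a i x * a i y * a i z +
        ∑ j : Fin t, (b j x * d j y * c j z + c j x * b j y * d j z +
          d j x * c j y * b j z)) :
    ∃ (a' : Fin (s * s) → ((Fin n × Fin n) × (Fin n × Fin n)) → ℝ)
      (b' c' d' : Fin (t * (s + r)) → ((Fin n × Fin n) × (Fin n × Fin n)) → ℝ),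
      ∀ x y z : (Fin n × Fin n) × (Fin n × Fin n),
        Tsq x y z = ∑ i : Fin (s * s), a' i x * a' i y * a' i z +
          ∑ j : Fin (t * (s + r)), (b' j x * d' j y * c' j z +
            c' j x * b' j y * d' j z + d' j x * c' j y * b' j z) := by
  have e₁ : Fin (s * s) ≃ Fin s × Fin s := finProdFinEquiv.symm
  have hcard : Fintype.card (J s t) = t * (s + r) := by
    simp [Fintype.card_sum, Fintype.card_prod]
    subst hr; ring
  have e₂ : Fin (t * (s + r)) ≃ J s t := (Fintype.equivFinOfCardEq hcard).symm
  refine ⟨fun i x => a (e₁ i).1 (s1 x) * a (e₁ i).2 (s2 x),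
    fun k => B' a b c d (e₂ k), fun k => C' a b c d (e₂ k), fun k => D' a b c d (e₂ k),
    fun x y z => ?_⟩
  rw [Tsq_split, h, h]
  rw [Equiv.sum_comp e₁ (fun p : Fin s × Fin s =>
    (a p.1 (s1 x) * a p.2 (s2 x)) * (a p.1 (s1 y) * a p.2 (s2 y)) *
      (a p.1 (s1 z) * a p.2 (s2 z)))]
  rw [Equiv.sum_comp e₂ (fun j : J s t =>
    B' a b c d j x * D' a b c d j y * C' a b c d j z +
    C' a b c d j x * B' a b c d j y * D' a b c d j z +
    D' a b c d j x * C' a b c d j y * B' a b c d j z)]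
  rw [Fintype.sum_sum_type, Fintype.sum_sum_type, Fintype.sum_sum_type, Fintype.sum_sum_type]
  simp only [B', C', D', Fintype.sum_prod_type]
  rw [add_mul, mul_add, mul_add, Finset.sum_mul_sum, Finset.sum_mul_sum,
    Finset.sum_mul_sum, Finset.sum_mul_sum]
  rw [sum_three]
  rw [add_assoc]
  congr 1
  · exact Finset.sum_congr rfl fun i _ => Finset.sum_congr rfl fun j _ => by ring
  congr 1
  · exact Finset.sum_congr rfl fun i _ => Finset.sum_congr rfl fun j _ => by ring
  congr 1
  · exact Finset.sum_congr rfl fun i _ => Finset.sum_congr rfl fun j _ => by ring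
  · exact Finset.sum_congr rfl fun i _ => Finset.sum_congr rfl fun j _ => by ring
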